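/- Let ε ≥ 0, R > 0, and let α > 0 be a real number with J_0(α) = 0. Set β = −α² / (R·(1 + ε·α²)) and define w : (0,1] → ℝ by w(r) = J_0(α·r). Then (1/R + β·ε)·(w''(r) + w'(r)/r) = β·w(r) for all r ∈ (0,1), and w(1) = 0. In other words, (w, ψ) = (J_0(α·), 0) is an eigensolution of the separated eigenvalue problem with azimuthal wavenumber m = 0 and eigenvalue β. -/

import Mathlib

noncomputable section

/-- The (real) Bessel function of the first kind of integer order m ≥ 0,
`J_m(x) = Σ_{k≥0} (−1)^k/(k!(k+m)!) (x/2)^{2k+m}`. -/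
def besselJr (m : ℕ) (x : ℝ) : ℝ :=
  ∑' k : ℕ, ((-1 : ℝ) ^ k / ((Nat.factorial k : ℝ) * (Nat.factorial (k + m) : ℝ)))
    * (x / 2) ^ (2 * k + m)

namespace BesselAux

def c (k : ℕ) : ℝ := ((-1:ℝ)^k / ((k.factorial : ℝ) * k.factorial)) / 4^k

def f (α : ℝ) (k : ℕ) (r : ℝ) : ℝ := c k * (α*r)^(2*k)
def f1 (α : ℝ) (k : ℕ) (r : ℝ) : ℝ := (c k * ((2*k : ℕ) : ℝ) * α) * (α*r)^(2*k-1)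
def f2 (α : ℝ) (k : ℕ) (r : ℝ) : ℝ :=
  (c k * ((2*k : ℕ) : ℝ) * ((2*k-1 : ℕ) : ℝ) * α^2) * (α*r)^(2*k-2)

lemma bessel_eq (x : ℝ) : besselJr 0 x = ∑' k : ℕ, c k * x^(2*k) := by
  unfold besselJr
  refine tsum_congr fun k => ?_
  have h4 : (2:ℝ)^(2*k) = 4^k := by rw [pow_mul]; norm_num
  simp only [add_zero, Nat.add_zero]
  rw [div_pow, h4]
  simp only [c]
  ring

lemma abs_c_le (k : ℕ) : |c k| ≤ 1 / (k.factorial : ℝ) := by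
  have hk : (0:ℝ) < k.factorial := by positivity
  have h : |c k| = 1 / ((k.factorial : ℝ) * k.factorial * 4^k) := by
    rw [c, abs_div, abs_div, abs_pow, abs_pow, abs_mul]
    simp [abs_of_pos hk]
    ring
  rw [h]
  apply one_div_le_one_div_of_le hk
  have h1 : (1:ℝ) ≤ k.factorial := by exact_mod_cast k.factorial_pos
  have h2 : (1:ℝ) ≤ 4^k := one_le_pow₀ (by norm_num)
  calc (k.factorial : ℝ) = k.factorial * 1 * 1 := by ring
    _ ≤ (k.factorial : ℝ) * k.factorial * 4^k := by gcongr

lemma hderiv_f (α : ℝ) (k : ℕ) (r : ℝ) : HasDerivAt (f α k) (f1 α k r) r := by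
  have h := (((hasDerivAt_id r).const_mul α).pow (2*k)).const_mul (c k)
  simp only [id_eq, mul_one] at h
  exact h.congr_deriv (by rw [f1]; ring)

lemma hderiv_f1 (α : ℝ) (k : ℕ) (r : ℝ) : HasDerivAt (f1 α k) (f2 α k r) r := by
  have h := (((hasDerivAt_id r).const_mul α).pow (2*k-1)).const_mul
    (c k * ((2*k : ℕ) : ℝ) * α)
  simp only [id_eq, mul_one] at h
  exact h.congr_deriv (by rw [f2, (show 2*k-1-1 = 2*k-2 by omega)]; ring)

lemma abs_ay {α y : ℝ} (hα : 0 < α) (hy : y ∈ Set.Ioo (-2:ℝ) 2) : |α*y| ≤ 2*α+1 := by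
  rw [abs_mul, abs_of_pos hα]
  have h2 : |y| ≤ 2 := by rw [abs_le]; exact ⟨hy.1.le, hy.2.le⟩
  nlinarith [abs_nonneg y]

lemma k_le (k : ℕ) : ((2*k : ℕ) : ℝ) ≤ 2*2^k := by
  have h := (Nat.lt_two_pow_self (n := k)).le
  have h' : (k:ℝ) ≤ 2^k := by exact_mod_cast h
  push_cast
  linarith

lemma bound_f {α : ℝ} (hα : 0 < α) (k : ℕ) {y : ℝ} (hy : y ∈ Set.Ioo (-2:ℝ) 2) :
    ‖f α k y‖ ≤ ((2*α+1)^2)^k / k.factorial := by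
  set C : ℝ := 2*α+1 with hC
  have hCpos : (0:ℝ) < C := by positivity
  have hpow : |α*y|^(2*k) ≤ C^(2*k) := pow_le_pow_left₀ (abs_nonneg _) (abs_ay hα hy) _
  have habs : ‖f α k y‖ = |c k| * |α*y|^(2*k) := by
    rw [f, Real.norm_eq_abs, abs_mul, abs_pow]
  rw [habs]
  calc |c k| * |α*y|^(2*k) ≤ (1/k.factorial) * C^(2*k) := by
        gcongr
        · exact abs_c_le k
      _ = (C^2)^k / k.factorial := by rw [← pow_mul]; ring

lemma bound_f1 {α : ℝ} (hα : 0 < α) (k : ℕ) {y : ℝ} (hy : y ∈ Set.Ioo (-2:ℝ) 2) :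
    ‖f1 α k y‖ ≤ 2*α*(2*(2*α+1)^2)^k / k.factorial := by
  set C : ℝ := 2*α+1 with hC
  have hC1 : (1:ℝ) ≤ C := by rw [hC]; linarith
  have hpow : |α*y|^(2*k-1) ≤ C^(2*k) := by
    calc |α*y|^(2*k-1) ≤ C^(2*k-1) := pow_le_pow_left₀ (abs_nonneg _) (abs_ay hα hy) _
      _ ≤ C^(2*k) := pow_le_pow_right₀ hC1 (by omega)
  have habs : ‖f1 α k y‖ = |c k| * ((2*k:ℕ):ℝ) * α * |α*y|^(2*k-1) := by
    rw [f1, Real.norm_eq_abs, abs_mul, abs_mul, abs_mul, abs_pow, abs_of_pos hα, Nat.abs_cast]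
  rw [habs]
  calc |c k| * ((2*k:ℕ):ℝ) * α * |α*y|^(2*k-1)
      ≤ (1/k.factorial) * (2*2^k) * α * C^(2*k) := by
        gcongr
        · exact abs_c_le k
        · exact k_le k
    _ = 2*α*(2*C^2)^k / k.factorial := by
        rw [mul_pow, ← pow_mul]; ring

lemma bound_f2 {α : ℝ} (hα : 0 < α) (k : ℕ) {y : ℝ} (hy : y ∈ Set.Ioo (-2:ℝ) 2) :
    ‖f2 α k y‖ ≤ 4*α^2*(4*(2*α+1)^2)^k / k.factorial := by
  set C : ℝ := 2*α+1 with hC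
  have hC1 : (1:ℝ) ≤ C := by rw [hC]; linarith
  have hpow : |α*y|^(2*k-2) ≤ C^(2*k) := by
    calc |α*y|^(2*k-2) ≤ C^(2*k-2) := pow_le_pow_left₀ (abs_nonneg _) (abs_ay hα hy) _
      _ ≤ C^(2*k) := pow_le_pow_right₀ hC1 (by omega)
  have hk1 : ((2*k-1:ℕ):ℝ) ≤ 2*2^k := by
    have : ((2*k-1:ℕ):ℝ) ≤ ((2*k:ℕ):ℝ) := by exact_mod_cast Nat.sub_le _ _
    linarith [k_le k]
  have habs : ‖f2 α k y‖ = |c k| * ((2*k:ℕ):ℝ) * ((2*k-1:ℕ):ℝ) * α^2 * |α*y|^(2*k-2) := by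
    rw [f2, Real.norm_eq_abs, abs_mul, abs_mul, abs_mul, abs_mul, abs_pow, abs_pow,
      abs_of_pos hα, Nat.abs_cast, Nat.abs_cast]
  rw [habs]
  calc |c k| * ((2*k:ℕ):ℝ) * ((2*k-1:ℕ):ℝ) * α^2 * |α*y|^(2*k-2)
      ≤ (1/k.factorial) * (2*2^k) * (2*2^k) * α^2 * C^(2*k) := by
        gcongr
        · exact abs_c_le k
        · exact k_le k
    _ = 4*α^2*(4*C^2)^k / k.factorial := by
        have h4 : (4:ℝ)^k = 2^k*2^k := by rw [← mul_pow]; norm_num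
        rw [mul_pow, h4, ← pow_mul]; ring

lemma c_succ (k : ℕ) : c (k+1) * (4*((k:ℝ)+1)^2) = -c k := by
  have hf : ((k.factorial:ℝ)) ≠ 0 := by positivity
  have hk1 : ((k:ℝ)+1) ≠ 0 := by positivity
  have h4 : ((4:ℝ)^k) ≠ 0 := by positivity
  rw [c, c, Nat.factorial_succ, pow_succ, pow_succ]
  push_cast
  field_simp

lemma term_id (α r : ℝ) (k : ℕ) :
    f2 α (k+1) r * r + f1 α (k+1) r = -α^2 * r * f α k r := by
  have e1 : 2*(k+1)-2 = 2*k := by omega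
  have e2 : 2*(k+1)-1 = 2*k+1 := by omega
  rw [f, f1, f2, e1, e2]
  push_cast
  linear_combination (α^2 * r * (α*r)^(2*k)) * c_succ k

end BesselAux

/-- The first family of m = 0 eigenmodes: if α is a zero of J₀ then
`w(r) = J₀(αr)` solves `(1/R + βε)Δ₀w = βw` with `w(1) = 0`, where
`β = −α²/(R(1+εα²))`. -/
theorem m_zero_first_eigenmodes (ε R α : ℝ) (hε : 0 ≤ ε) (hR : 0 < R) (hα : 0 < α)
    (hroot : besselJr 0 α = 0) (β : ℝ) (hβ : β = -α ^ 2 / (R * (1 + ε * α ^ 2)))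
    (w : ℝ → ℝ) (hw : w = fun r => besselJr 0 (α * r)) :
    (∀ r ∈ Set.Ioo (0 : ℝ) 1,
      (1 / R + β * ε) * (deriv (deriv w) r + deriv w r / r) = β * w r)
    ∧ w 1 = 0 := by
  open BesselAux in
  have h1ε : (0:ℝ) < 1 + ε*α^2 := by nlinarith [sq_nonneg α]
  have hw' : w = fun r => ∑' k, BesselAux.f α k r := by
    rw [hw]; funext r; rw [BesselAux.bessel_eq]; rfl
  constructor
  · intro r hr
    have hto : IsOpen (Set.Ioo (-2:ℝ) 2) := isOpen_Ioo
    have htc : IsPreconnected (Set.Ioo (-2:ℝ) 2) := (convex_Ioo _ _).isPreconnected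
    have hrt : r ∈ Set.Ioo (-2:ℝ) 2 := ⟨by linarith [hr.1], by linarith [hr.2]⟩
    have hu0 : Summable (fun k : ℕ => (((2*α+1)^2)^k : ℝ) / k.factorial) :=
      Real.summable_pow_div_factorial _
    have hu1 : Summable (fun k : ℕ => 2*α*(2*(2*α+1)^2)^k / k.factorial) := by
      simpa [mul_div_assoc] using (Real.summable_pow_div_factorial (2*(2*α+1)^2)).mul_left (2*α)
    have hu2 : Summable (fun k : ℕ => 4*α^2*(4*(2*α+1)^2)^k / k.factorial) := by
      simpa [mul_div_assoc] using
        (Real.summable_pow_div_factorial (4*(2*α+1)^2)).mul_left (4*α^2)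
    have sum_f_r : Summable (fun k => BesselAux.f α k r) :=
      Summable.of_norm_bounded hu0 (fun k => BesselAux.bound_f hα k hrt)
    have sum_f1_r : Summable (fun k => BesselAux.f1 α k r) :=
      Summable.of_norm_bounded hu1 (fun k => BesselAux.bound_f1 hα k hrt)
    have sum_f2_r : Summable (fun k => BesselAux.f2 α k r) :=
      Summable.of_norm_bounded hu2 (fun k => BesselAux.bound_f2 hα k hrt)
    have hW1 : ∀ y ∈ Set.Ioo (-2:ℝ) 2,
        HasDerivAt (fun z => ∑' k, BesselAux.f α k z) (∑' k, BesselAux.f1 α k y) y :=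
      fun y hy => hasDerivAt_tsum_of_isPreconnected hu1 hto htc
        (fun k z _ => BesselAux.hderiv_f α k z)
        (fun k z hz => BesselAux.bound_f1 hα k hz) hrt sum_f_r hy
    have hW2 : ∀ y ∈ Set.Ioo (-2:ℝ) 2,
        HasDerivAt (fun z => ∑' k, BesselAux.f1 α k z) (∑' k, BesselAux.f2 α k y) y :=
      fun y hy => hasDerivAt_tsum_of_isPreconnected hu2 hto htc
        (fun k z _ => BesselAux.hderiv_f1 α k z)
        (fun k z hz => BesselAux.bound_f2 hα k hz) hrt sum_f1_r hy
    have hd1 : ∀ y ∈ Set.Ioo (-2:ℝ) 2, deriv w y = ∑' k, BesselAux.f1 α k y := by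
      intro y hy; rw [hw']; exact (hW1 y hy).deriv
    have hd2 : deriv (deriv w) r = ∑' k, BesselAux.f2 α k r := by
      have he : deriv w =ᶠ[nhds r] (fun y => ∑' k, BesselAux.f1 α k y) :=
        Filter.eventuallyEq_of_mem (hto.mem_nhds hrt) hd1
      rw [he.deriv_eq]
      exact (hW2 r hrt).deriv
    have hwr : w r = ∑' k, BesselAux.f α k r := by rw [hw']
    have hrne : r ≠ 0 := ne_of_gt hr.1
    have hsum : Summable (fun k => BesselAux.f2 α k r * r + BesselAux.f1 α k r) :=
      (sum_f2_r.mul_right r).add sum_f1_r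
    have h0 : BesselAux.f2 α 0 r * r + BesselAux.f1 α 0 r = 0 := by
      simp [BesselAux.f1, BesselAux.f2]
    have hmain : (∑' k, BesselAux.f2 α k r) * r + ∑' k, BesselAux.f1 α k r
        = -α^2*r*∑' k, BesselAux.f α k r := by
      rw [← tsum_mul_right, ← Summable.tsum_add (sum_f2_r.mul_right r) sum_f1_r,
        Summable.tsum_eq_zero_add hsum, h0, zero_add]
      calc ∑' k, (BesselAux.f2 α (k+1) r * r + BesselAux.f1 α (k+1) r)
          = ∑' k, -α^2*r*BesselAux.f α k r := tsum_congr (BesselAux.term_id α r)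
        _ = -α^2*r*∑' k, BesselAux.f α k r := tsum_mul_left
    have key : (∑' k, BesselAux.f2 α k r) + (∑' k, BesselAux.f1 α k r)/r
        = -α^2 * ∑' k, BesselAux.f α k r := by
      field_simp
      linarith [hmain]
    rw [hd2, hd1 r hrt, hwr, key, hβ]
    field_simp
    ring
  · rw [hw]; simpa using hroot
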